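/- For all positive reals a and b, 5·S + P2 + G − 7·A ≥ 0, i.e. A + S − G ≤ 6·S + P2 − 6·A, where S = √((a²+b²)/2), P2 = (a^{-1}+b^{-1})/(a^{-2}+b^{-2}) = ab(a+b)/(a²+b²), G = √(ab), and A = (a+b)/2. -/

import Mathlib

theorem stmt_18 (a b : ℝ) (ha : 0 < a) (hb : 0 < b) :
    let S := Real.sqrt ((a^2+b^2)/2)
    let P2 := a*b*(a+b)/(a^2+b^2)
    let G := Real.sqrt (a*b)
    let A := (a+b)/2
    5*S + P2 + G - 7*A ≥ 0 := by
  intro S P2 G A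
  have hS0 : 0 ≤ S := Real.sqrt_nonneg _
  have hG0 : 0 ≤ G := Real.sqrt_nonneg _
  have hS2 : S^2 = (a^2+b^2)/2 := Real.sq_sqrt (by positivity)
  have hG2 : G^2 = a*b := Real.sq_sqrt (by positivity)
  have hA' : A = (a+b)/2 := rfl
  have hA : 0 < A := by rw [hA']; linarith
  have hsum : S^2 + G^2 = 2*A^2 := by rw [hS2, hG2, hA']; ring
  have hSA : A ≤ S := by nlinarith [sq_nonneg (a-b)]
  have hGA : G ≤ A := by nlinarith [sq_nonneg (a-b)]
  have hSpos : 0 < S := lt_of_lt_of_le hA hSA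
  have key : (0:ℝ) ≤ 5*S^3 + G*S^2 + A*G^2 - 7*A*S^2 := by
    nlinarith [sq_nonneg (S-A), sq_nonneg (A-G), sq_nonneg (S-G),
      mul_nonneg (sub_nonneg.2 hSA) (sub_nonneg.2 hGA), sq_nonneg (S+G-2*A),
      mul_nonneg (mul_nonneg (sub_nonneg.2 hSA) (sub_nonneg.2 hGA)) hA.le,
      mul_nonneg (sub_nonneg.2 hSA) (sq_nonneg (A-G)),
      mul_nonneg (sub_nonneg.2 hGA) (sq_nonneg (S-A))]
  have hP : P2 = A*G^2/S^2 := by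
    show a*b*(a+b)/(a^2+b^2) = A*G^2/S^2
    rw [hG2, hS2, hA']
    have h2 : (0:ℝ) < a^2+b^2 := by positivity
    field_simp
  rw [hP]
  have heq : 5*S + A*G^2/S^2 + G - 7*A = (5*S^3 + G*S^2 + A*G^2 - 7*A*S^2)/S^2 := by
    field_simp
    ring
  rw [heq]
  exact div_nonneg key (by positivity)
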